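/- arXiv:1310.4794 — 2 statements merged into one kernel-verified Lean document; each statement's English description precedes it below -/
import Mathlib

section
/- Let H be a real Hilbert space, let k₁, …, kₙ be elements of H, let y ∈ ℝⁿ, and let λ > 0. Define the functional E_λ : H → ℝ by E_λ(f) = Σⱼ₌₁ⁿ (yⱼ − ⟨kⱼ, f⟩)² + λ‖f‖². Then the element f̂_λ = Σᵢ₌₁ⁿ cᵢ kᵢ, where c = (K_D + λ Iₙ)⁻¹ y and K_D is the n×n matrix with entries [K_D]ᵢⱼ = ⟨kᵢ, kⱼ⟩, is the unique minimizer of E_λ: for every f ∈ H one has E_λ(f̂_λ) ≤ E_λ(f), with equality only if f = f̂_λ. -/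
open scoped RealInnerProductSpace Matrix

/-- The ridge-regression representer theorem: the function
`f̂_λ = ∑ i, c i • k i` with `c = (K_D + λ Iₙ)⁻¹ y` is the unique minimizer of
`E_λ(f) = ∑ j (y j - ⟪k j, f⟫)² + λ ‖f‖²` over a real Hilbert space `H`. -/
theorem ridge_regression_unique_minimizer
    {H : Type*} [NormedAddCommGroup H] [InnerProductSpace ℝ H] [CompleteSpace H]
    (n : ℕ) (k : Fin n → H) (y : Fin n → ℝ) (lam : ℝ) (hlam : 0 < lam)
    (KD : Matrix (Fin n) (Fin n) ℝ) (hKD : ∀ i j, KD i j = ⟪k i, k j⟫)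
    (c : Fin n → ℝ)
    (hc : c = (KD + lam • (1 : Matrix (Fin n) (Fin n) ℝ))⁻¹ *ᵥ y)
    (E : H → ℝ)
    (hE : ∀ f : H, E f = (∑ j, (y j - ⟪k j, f⟫) ^ 2) + lam * ‖f‖ ^ 2)
    (fhat : H) (hfhat : fhat = ∑ i, c i • k i) :
    ∀ f : H, E fhat ≤ E f ∧ (E f = E fhat → f = fhat) := by
  set A := KD + lam • (1 : Matrix (Fin n) (Fin n) ℝ) with hA
  -- Gram identity
  have gram : ∀ x : Fin n → ℝ,
      (∑ j, ∑ i, x j * (KD j i * x i)) = ‖∑ i, x i • k i‖ ^ 2 := by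
    intro x
    rw [← real_inner_self_eq_norm_sq, sum_inner]
    refine Finset.sum_congr rfl fun j _ => ?_
    rw [inner_sum]
    refine Finset.sum_congr rfl fun i _ => ?_
    rw [real_inner_smul_left, real_inner_smul_right, hKD]
    ring
  -- A is positive definite
  have hKDh : KD.IsHermitian := by
    ext i j
    simp [Matrix.conjTranspose_apply, hKD, real_inner_comm]
  have hApd : A.PosDef := by
    rw [Matrix.posDef_iff_dotProduct_mulVec]
    constructor
    · exact hKDh.add (by simp [Matrix.IsHermitian, Matrix.conjTranspose_smul])
    · intro x hx
      have hx2 : 0 < ∑ i, x i * x i := by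
        have : ∃ i, x i ≠ 0 := by
          by_contra h
          push_neg at h
          exact hx (funext h)
        obtain ⟨i, hi⟩ := this
        exact Finset.sum_pos' (fun j _ => mul_self_nonneg _)
          ⟨i, Finset.mem_univ i, mul_self_pos.mpr hi⟩
      have hval : dotProduct (star x) (A *ᵥ x)
          = (∑ j, ∑ i, x j * (KD j i * x i)) + lam * ∑ i, x i * x i := by
        simp only [dotProduct, Matrix.mulVec, hA, Matrix.add_apply,
          Matrix.smul_apply, Matrix.one_apply, star_trivial, smul_eq_mul]
        rw [Finset.mul_sum, ← Finset.sum_add_distrib]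
        refine Finset.sum_congr rfl fun j _ => ?_
        have hdiag : lam * (x j * x j)
            = ∑ i, x j * ((lam * if j = i then 1 else 0) * x i) := by
          rw [Finset.sum_eq_single j]
          · simp; ring
          · intro b _ hb; simp [Ne.symm hb]
          · simp
        rw [hdiag, ← Finset.sum_add_distrib, Finset.mul_sum]
        apply Finset.sum_congr rfl
        intro i _
        ring
      rw [hval, gram]
      have : 0 ≤ ‖∑ i, x i • k i‖ ^ 2 := by positivity
      nlinarith
  -- the linear system
  have hAc : A *ᵥ c = y := by
    rw [hc, Matrix.mulVec_mulVec, Matrix.mul_nonsing_inv _ hApd.det_pos.ne'.isUnit,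
      Matrix.one_mulVec]
  -- residual identity
  have hres : ∀ j, y j - ⟪k j, fhat⟫ = lam * c j := by
    intro j
    have h1 : (A *ᵥ c) j = y j := by rw [hAc]
    have h2 : (A *ᵥ c) j = (∑ i, KD j i * c i) + lam * c j := by
      simp only [Matrix.mulVec, dotProduct, hA, Matrix.add_apply, Matrix.smul_apply,
        Matrix.one_apply, smul_eq_mul, add_mul]
      rw [Finset.sum_add_distrib]
      congr 1
      rw [Finset.sum_eq_single j]
      · simp
      · intro b _ hb; simp [Ne.symm hb]
      · simp
    have h3 : ⟪k j, fhat⟫ = ∑ i, KD j i * c i := by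
      rw [hfhat, inner_sum]
      refine Finset.sum_congr rfl fun i _ => ?_
      rw [real_inner_smul_right, hKD]
      ring
    rw [h3]
    linarith [h1.symm.trans h2]
  -- key orthogonality / normal equations
  have hkey : ∀ g : H, ∑ j, (y j - ⟪k j, fhat⟫) * ⟪k j, g⟫ = lam * ⟪fhat, g⟫ := by
    intro g
    simp only [hres]
    rw [hfhat, sum_inner, Finset.mul_sum]
    refine Finset.sum_congr rfl fun j _ => ?_
    rw [real_inner_smul_left]
    ring
  intro f
  set g : H := f - fhat with hg
  have hf : f = fhat + g := by simp [hg]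
  have expand : E f = E fhat + ((∑ j, ⟪k j, g⟫ ^ 2) + lam * ‖g‖ ^ 2) := by
    rw [hE f, hE fhat, hf]
    have hnorm : ‖fhat + g‖ ^ 2 = ‖fhat‖ ^ 2 + 2 * ⟪fhat, g⟫ + ‖g‖ ^ 2 := by
      rw [← real_inner_self_eq_norm_sq, ← real_inner_self_eq_norm_sq,
        ← real_inner_self_eq_norm_sq, inner_add_add_self, real_inner_comm g fhat]
      ring
    have hsum : ∑ j, (y j - ⟪k j, fhat + g⟫) ^ 2
        = (∑ j, (y j - ⟪k j, fhat⟫) ^ 2)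
          - 2 * (∑ j, (y j - ⟪k j, fhat⟫) * ⟪k j, g⟫) + ∑ j, ⟪k j, g⟫ ^ 2 := by
      rw [Finset.mul_sum, ← Finset.sum_sub_distrib, ← Finset.sum_add_distrib]
      refine Finset.sum_congr rfl fun j _ => ?_
      rw [inner_add_right]
      ring
    rw [hsum, hnorm, hkey g]
    ring
  have hsq : 0 ≤ ∑ j, ⟪k j, g⟫ ^ 2 := Finset.sum_nonneg fun j _ => sq_nonneg _
  have hn : 0 ≤ lam * ‖g‖ ^ 2 := by positivity
  refine ⟨by linarith, fun heq => ?_⟩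
  have hz : lam * ‖g‖ ^ 2 = 0 := by linarith
  have : g = 0 := by
    have : ‖g‖ ^ 2 = 0 := by
      rcases mul_eq_zero.mp hz with h | h
      · exact absurd h hlam.ne'
      · exact h
    simpa [pow_eq_zero_iff] using this
  rw [hf, this, add_zero]
end

section
/- Let H be a real Hilbert space, let k₁, …, kₙ be elements of H, let y ∈ ℝⁿ, and let λ > 0. Define E_λ(f) = Σⱼ₌₁ⁿ (yⱼ − ⟨kⱼ, f⟩)² + λ‖f‖² and let f̂_λ = Σᵢ₌₁ⁿ cᵢ kᵢ with c = (K_D + λ Iₙ)⁻¹ y. Then the minimum value of E_λ is E_λ(f̂_λ) = λ · ⟨(K_D + λ Iₙ)⁻¹ y, y⟩, where ⟨·,·⟩ on the right denotes the Euclidean inner product on ℝⁿ. -/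
open scoped RealInnerProductSpace Matrix

/-- The minimum value of the ridge-regression functional
`E_λ(f) = ∑ j (y j - ⟪k j, f⟫)² + λ ‖f‖²`, attained at
`f̂_λ = ∑ i c i • k i` with `c = (K_D + λ Iₙ)⁻¹ y`, equals
`λ ⟨(K_D + λ Iₙ)⁻¹ y, y⟩` (Euclidean inner product on ℝⁿ). -/
theorem ridge_regression_min_value
    {H : Type*} [NormedAddCommGroup H] [InnerProductSpace ℝ H] [CompleteSpace H]
    (n : ℕ) (k : Fin n → H) (y : Fin n → ℝ) (lam : ℝ) (hlam : 0 < lam)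
    (KD : Matrix (Fin n) (Fin n) ℝ) (hKD : ∀ i j, KD i j = ⟪k i, k j⟫)
    (c : Fin n → ℝ)
    (hc : c = (KD + lam • (1 : Matrix (Fin n) (Fin n) ℝ))⁻¹ *ᵥ y)
    (E : H → ℝ)
    (hE : ∀ f : H, E f = (∑ j, (y j - ⟪k j, f⟫) ^ 2) + lam * ‖f‖ ^ 2)
    (fhat : H) (hfhat : fhat = ∑ i, c i • k i) :
    E fhat = lam * (((KD + lam • (1 : Matrix (Fin n) (Fin n) ℝ))⁻¹ *ᵥ y) ⬝ᵥ y) := by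
  set A := KD + lam • (1 : Matrix (Fin n) (Fin n) ℝ) with hA
  -- key computation: inner products of linear combinations
  have key : ∀ v w : Fin n → ℝ,
      ⟪∑ i, v i • k i, ∑ j, w j • k j⟫ = v ⬝ᵥ (KD *ᵥ w) := by
    intro v w
    rw [sum_inner]
    simp only [dotProduct, Matrix.mulVec, dotProduct, inner_sum,
      real_inner_smul_left, real_inner_smul_right, hKD, Finset.mul_sum]
    refine Finset.sum_congr rfl fun i _ => Finset.sum_congr rfl fun j _ => by ring
  -- KD is positive semidefinite
  have hsym : KD.IsHermitian := by
    ext i j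
    simp [Matrix.conjTranspose_apply, hKD, real_inner_comm]
  have hpsd : KD.PosSemidef := by
    refine Matrix.posSemidef_iff_dotProduct_mulVec.mpr ⟨hsym, fun x => ?_⟩
    have : (star x) ⬝ᵥ (KD *ᵥ x) = ⟪∑ i, x i • k i, ∑ j, x j • k j⟫ := by
      rw [key]; simp
    rw [this]
    exact real_inner_self_nonneg
  -- lam • 1 is positive definite
  have hpd1 : (lam • (1 : Matrix (Fin n) (Fin n) ℝ)).PosDef := by
    rw [Matrix.smul_one_eq_diagonal]
    exact Matrix.PosDef.diagonal fun _ => hlam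
  have hApd : A.PosDef := Matrix.PosDef.posSemidef_add hpsd hpd1
  have hdet : IsUnit A.det := hApd.det_pos.ne'.isUnit
  -- A *ᵥ c = y
  have hAc : A *ᵥ c = y := by
    rw [hc, Matrix.mulVec_mulVec, Matrix.mul_nonsing_inv _ hdet, Matrix.one_mulVec]
  have hKDc : KD *ᵥ c = y - lam • c := by
    have : A *ᵥ c = KD *ᵥ c + lam • c := by
      rw [hA, Matrix.add_mulVec, Matrix.smul_mulVec, Matrix.one_mulVec]
    rw [this] at hAc
    rw [← hAc]; abel
  -- ⟪k j, fhat⟫ = y j - lam * c j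
  have hinner : ∀ j, ⟪k j, fhat⟫ = y j - lam * c j := by
    intro j
    have : ⟪k j, fhat⟫ = (KD *ᵥ c) j := by
      rw [hfhat, inner_sum]
      simp [Matrix.mulVec, dotProduct, real_inner_smul_right, hKD, mul_comm]
    rw [this, hKDc]
    simp
  -- ‖fhat‖² = c ⬝ᵥ y - lam * (c ⬝ᵥ c)
  have hnorm : ‖fhat‖ ^ 2 = c ⬝ᵥ y - lam * (c ⬝ᵥ c) := by
    have h1 : ‖fhat‖ ^ 2 = ⟪fhat, fhat⟫ := (real_inner_self_eq_norm_sq fhat).symm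
    rw [h1, hfhat, key, hKDc]
    simp [dotProduct, Finset.mul_sum, mul_sub, Finset.sum_sub_distrib, mul_assoc,
      mul_left_comm]
  have hcy : ((KD + lam • (1 : Matrix (Fin n) (Fin n) ℝ))⁻¹ *ᵥ y) ⬝ᵥ y = c ⬝ᵥ y := by
    rw [hc]
  rw [hE, hnorm, hcy]
  have hsum : ∑ j, (y j - ⟪k j, fhat⟫) ^ 2 = lam ^ 2 * (c ⬝ᵥ c) := by
    simp only [hinner]
    rw [dotProduct, Finset.mul_sum]
    exact Finset.sum_congr rfl fun j _ => by ring
  rw [hsum]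
  ring
end
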